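/- Let q, h, a : ℝ → E³ together with a conical curvature κ : ℝ → ℝ be a Frenet frame of a ruled surface, and let u ∈ E³ be a fixed vector and c ∈ ℝ a constant with ⟪h(s), u⟫ = c for all s. Then for every s, ⟪a(s), u⟫² · (1 + κ(s)²) = ‖u‖² − c²; in particular this quantity is constant along the surface. -/

import Mathlib

open RealInnerProductSpace Matrix

noncomputable section

abbrev E3 := EuclideanSpace ℝ (Fin 3)

/-- A Frenet frame of a ruled surface: `q`, `h`, `a` are orthonormal at every
parameter and satisfy the Frenet equations with conical curvature `κ`. -/
def IsFrenetFrame (q h a : ℝ → E3) (κ : ℝ → ℝ) : Prop :=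
  (∀ s, ⟪q s, q s⟫ = 1 ∧ ⟪h s, h s⟫ = 1 ∧ ⟪a s, a s⟫ = 1 ∧
        ⟪q s, h s⟫ = 0 ∧ ⟪q s, a s⟫ = 0 ∧ ⟪h s, a s⟫ = 0) ∧
  (∀ s, HasDerivAt q (h s) s) ∧
  (∀ s, HasDerivAt h (-q s + κ s • a s) s) ∧
  (∀ s, HasDerivAt a (-(κ s • h s)) s)

/-- The Darboux vector of the frame. -/
def darboux (q a : ℝ → E3) (κ : ℝ → ℝ) : ℝ → E3 := fun s => κ s • q s + a s

theorem a_component_sq_mul_const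
    (q h a : ℝ → E3) (κ : ℝ → ℝ)
    (hframe : IsFrenetFrame q h a κ)
    (u : E3) (c : ℝ)
    (hslant : ∀ s, ⟪h s, u⟫ = c) :
    ∀ s, ⟪a s, u⟫ ^ 2 * (1 + κ s ^ 2) = ‖u‖ ^ 2 - c ^ 2 := by
  obtain ⟨horth, hq', hh', ha'⟩ := hframe
  intro s
  -- derivative of ⟪h ·, u⟫ is zero since it is constant
  have hconst : HasDerivAt (fun t => ⟪h t, u⟫) ⟪-q s + κ s • a s, u⟫ s := by
    simpa using ((hh' s).inner ℝ (hasDerivAt_const s u))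
  have hzero : ⟪-q s + κ s • a s, u⟫ = 0 := by
    have : HasDerivAt (fun _ : ℝ => c) ⟪-q s + κ s • a s, u⟫ s := by
      simpa [hslant] using hconst
    have h2 := (hasDerivAt_const s c).unique this
    linarith [h2]
  have hqu : ⟪q s, u⟫ = κ s * ⟪a s, u⟫ := by
    have h0 := hzero
    rw [inner_add_left, inner_neg_left, real_inner_smul_left] at h0
    linarith
  -- the frame is an orthonormal basis
  obtain ⟨h1, h2, h3, h4, h5, h6⟩ := horth s
  have horthn : Orthonormal ℝ ![q s, h s, a s] := by
    rw [orthonormal_iff_ite]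
    intro i j
    have c1 : ⟪h s, q s⟫ = 0 := by rw [real_inner_comm]; exact h4
    have c2 : ⟪a s, q s⟫ = 0 := by rw [real_inner_comm]; exact h5
    have c3 : ⟪a s, h s⟫ = 0 := by rw [real_inner_comm]; exact h6
    fin_cases i <;> fin_cases j <;>
      simp only [Matrix.cons_val_zero, Matrix.cons_val_one, Matrix.head_cons,
        Matrix.cons_val_two, Matrix.tail_cons, Fin.mk_zero, Fin.mk_one] <;>
      first
        | simpa using h1 | simpa using h2 | simpa using h3
        | simpa using h4 | simpa using h5 | simpa using h6
        | simpa using c1 | simpa using c2 | simpa using c3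
  have hcard : Fintype.card (Fin 3) = Module.finrank ℝ E3 := by simp
  set b := basisOfLinearIndependentOfCardEqFinrank horthn.linearIndependent hcard with hb
  have hbcoe : ⇑b = ![q s, h s, a s] :=
    coe_basisOfLinearIndependentOfCardEqFinrank _ _
  have honb : Orthonormal ℝ ⇑b := by rw [hbcoe]; exact horthn
  set ob := b.toOrthonormalBasis honb
  have hob : ⇑ob = ![q s, h s, a s] := by
    simp [ob, Module.Basis.coe_toOrthonormalBasis, hbcoe]
  have hsum := ob.sum_inner_mul_inner u u
  rw [hob] at hsum
  have hnorm : ⟪u, u⟫ = ‖u‖ ^ 2 := real_inner_self_eq_norm_sq u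
  rw [Fin.sum_univ_three] at hsum
  simp only [Matrix.cons_val_zero, Matrix.cons_val_one, Matrix.head_cons,
    Matrix.cons_val_two, Matrix.tail_cons] at hsum
  have hhu := hslant s
  have e1 : ⟪u, q s⟫ = ⟪q s, u⟫ := real_inner_comm _ _
  have e2 : ⟪u, h s⟫ = ⟪h s, u⟫ := real_inner_comm _ _
  have e3 : ⟪u, a s⟫ = ⟪a s, u⟫ := real_inner_comm _ _
  rw [e1, e2, e3, hnorm, hhu, hqu] at hsum
  linear_combination hsum
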